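/- Let A be a von Neumann algebra on H, let N, M be closed subspaces with P_N, P_M ∈ A, and let D ∈ A. Then D is invertible up to the pair (I−P_N, I−P_M) in A if and only if the compression P_M D restricted to N is a bijective bounded operator from N onto M. -/

import Mathlib

variable {H : Type*} [NormedAddCommGroup H] [InnerProductSpace ℂ H] [CompleteSpace H]

/-- `P` is the orthogonal projection of `H` onto the subspace `K`. -/
def IsOrthProjOnto (P : H →L[ℂ] H) (K : Submodule ℂ H) : Prop :=
  P * P = P ∧ star P = P ∧ LinearMap.range (P : H →ₗ[ℂ] H) = K

/-- `a` is invertible up to the pair of projections `(p, q)`, with witness in `S`. -/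
def InvUpToIn {R : Type*} [Ring R] [StarRing R] (S : Set R) (a p q : R) : Prop :=
  ∃ b ∈ S, b = (1 - p) * b * (1 - q) ∧ (1 - q) * a * (1 - p) * b = 1 - q ∧
    b * ((1 - q) * a * (1 - p)) = 1 - p

lemma IsOrthProjOnto.fix {P : H →L[ℂ] H} {K : Submodule ℂ H} (h : IsOrthProjOnto P K) :
    ∀ x ∈ K, P x = x := by
  intro x hx
  obtain ⟨y, rfl⟩ := h.2.2 ▸ hx
  have := ContinuousLinearMap.ext_iff.mp h.1 y
  simpa [ContinuousLinearMap.mul_apply] using this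

lemma IsOrthProjOnto.mem {P : H →L[ℂ] H} {K : Submodule ℂ H} (h : IsOrthProjOnto P K) :
    ∀ x, P x ∈ K := fun x => h.2.2 ▸ ⟨x, rfl⟩

lemma IsOrthProjOnto.closed {P : H →L[ℂ] H} {K : Submodule ℂ H} (h : IsOrthProjOnto P K) :
    IsClosed (K : Set H) := by
  have : (K : Set H) = {x | P x = x} := by
    ext x
    constructor
    · exact fun hx => h.fix x hx
    · intro hx; exact h.2.2 ▸ ⟨x, hx⟩
  rw [this]
  exact isClosed_eq P.continuous continuous_id

/-- `D` is invertible up to `(I - P_N, I - P_M)` in `A` iff the compression `P_M D`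
restricted to `N` is a bounded bijection from `N` onto `M`. -/
theorem invUpTo_iff_compression_bijective (A : VonNeumannAlgebra H)
    (N M : Submodule ℂ H) (PN PM : H →L[ℂ] H)
    (hPN : IsOrthProjOnto PN N) (hPNA : PN ∈ A)
    (hPM : IsOrthProjOnto PM M) (hPMA : PM ∈ A)
    (D : H →L[ℂ] H) (hD : D ∈ A) :
    InvUpToIn (A : Set (H →L[ℂ] H)) D (1 - PN) (1 - PM) ↔
      (Set.InjOn (PM * D) (N : Set H) ∧ (PM * D) '' (N : Set H) = (M : Set H)) := by
  simp only [InvUpToIn, sub_sub_cancel]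
  constructor
  · rintro ⟨b, hbA, hb1, hb2, hb3⟩
    have key : ∀ x ∈ N, b ((PM * D) x) = x := by
      intro x hx
      have h := ContinuousLinearMap.ext_iff.mp hb3 x
      simp only [ContinuousLinearMap.mul_apply, hPN.fix x hx] at h
      simpa [ContinuousLinearMap.mul_apply] using h
    constructor
    · intro x hx y hy hxy
      rw [← key x hx, ← key y hy, hxy]
    · ext m
      constructor
      · rintro ⟨x, hx, rfl⟩
        exact hPM.mem _
      · intro hm
        have hbmN : b m ∈ N := by
          have : b m = PN ((b * PM) m) := by
            conv_lhs => rw [hb1]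
            simp [ContinuousLinearMap.mul_apply]
          rw [this]
          exact hPN.mem _
        refine ⟨b m, hbmN, ?_⟩
        have h := ContinuousLinearMap.ext_iff.mp hb2 m
        simp only [ContinuousLinearMap.mul_apply] at h ⊢
        rw [hPN.fix _ hbmN] at h
        rw [h, hPM.fix m hm]
  · rintro ⟨hinj, himg⟩
    haveI : CompleteSpace N := hPN.closed.completeSpace_coe
    haveI : CompleteSpace M := hPM.closed.completeSpace_coe
    set f : N →L[ℂ] M := ContinuousLinearMap.codRestrict ((PM * D).comp N.subtypeL) M
      (fun n => hPM.mem _) with hfdef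
    have hf_apply : ∀ n : N, (f n : H) = (PM * D) n.1 := fun n => rfl
    have hker : LinearMap.ker (f : N →ₗ[ℂ] M) = ⊥ := by
      rw [LinearMap.ker_eq_bot]
      intro n m hnm
      apply Subtype.ext
      apply hinj n.2 m.2
      have : (f n : H) = (f m : H) := congrArg Subtype.val hnm
      simpa [hf_apply] using this
    have hrange : LinearMap.range (f : N →ₗ[ℂ] M) = ⊤ := by
      rw [LinearMap.range_eq_top]
      intro m
      have hm : (m : H) ∈ (PM * D) '' (N : Set H) := himg ▸ m.2
      obtain ⟨x, hx, hfx⟩ := hm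
      exact ⟨⟨x, hx⟩, Subtype.ext (by simpa [hf_apply] using hfx)⟩
    set e := ContinuousLinearEquiv.ofBijective f hker hrange with hedef
    have he_apply : ∀ n : N, e n = f n := fun n => rfl
    set PM' : H →L[ℂ] M := ContinuousLinearMap.codRestrict PM M (fun x => hPM.mem x) with hPM'def
    set b : H →L[ℂ] H := N.subtypeL.comp ((e.symm : M →L[ℂ] N).comp PM') with hbdef
    have hb_apply : ∀ h : H, b h = (e.symm ⟨PM h, hPM.mem h⟩ : N) := fun h => rfl
    have hbN : ∀ h : H, b h ∈ N := fun h => (e.symm ⟨PM h, hPM.mem h⟩).2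
    -- the three structural equations
    have hb1 : b = PN * b * PM := by
      ext h
      have h1 : PM (PM h) = PM h := by
        have := ContinuousLinearMap.ext_iff.mp hPM.1 h
        simpa [ContinuousLinearMap.mul_apply] using this
      have h2 : b (PM h) = b h := by
        rw [hb_apply, hb_apply]
        congr 2
        exact Subtype.ext h1
      simp only [ContinuousLinearMap.mul_apply]
      rw [h2, hPN.fix _ (hbN h)]
    have hb2 : PM * D * PN * b = PM := by
      ext h
      simp only [ContinuousLinearMap.mul_apply]
      rw [hPN.fix _ (hbN h)]
      have : PM (D (b h)) = (f (e.symm ⟨PM h, hPM.mem h⟩) : H) := by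
        rw [hf_apply]
        simp only [ContinuousLinearMap.mul_apply]
        rw [hb_apply]
      rw [this, ← he_apply, e.apply_symm_apply]
    have hb3 : b * (PM * D * PN) = PN := by
      ext h
      simp only [ContinuousLinearMap.mul_apply]
      set n : N := ⟨PN h, hPN.mem h⟩ with hn
      have h1 : PM (D (PN h)) = (f n : H) := rfl
      have h2 : PM ((f n : H)) = (f n : H) := hPM.fix _ (f n).2
      rw [h1, hb_apply]
      have h3 : (⟨PM (f n : H), hPM.mem _⟩ : M) = f n := Subtype.ext h2
      rw [h3, ← he_apply, e.symm_apply_apply]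
    -- membership in the von Neumann algebra via double commutant
    have hbA : b ∈ A := by
      have hcc := A.centralizer_centralizer
      rw [← SetLike.mem_coe, ← hcc]
      rw [Set.mem_centralizer_iff]
      intro z hz
      rw [Set.mem_centralizer_iff] at hz
      have hzPN : PN * z = z * PN := hz PN (by simpa using hPNA)
      have hzPM : PM * z = z * PM := hz PM (by simpa using hPMA)
      have hzD : D * z = z * D := hz D (by simpa using hD)
      have hPNb : PN * b = b := by
        conv_lhs => rw [hb1]
        rw [← mul_assoc, ← mul_assoc, hPN.1]
        rw [← hb1]
      have hbPM : b * PM = b := by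
        conv_lhs => rw [hb1]
        rw [mul_assoc (PN * b) PM PM, hPM.1, ← hb1]
      calc z * b = z * (PN * b) := by rw [hPNb]
        _ = (z * PN) * b := by rw [mul_assoc]
        _ = (PN * z) * b := by rw [hzPN]
        _ = ((b * (PM * D * PN)) * z) * b := by rw [hb3]
        _ = b * (((PM * D) * (PN * z)) * b) := by
              simp only [mul_assoc]
        _ = b * (((PM * D) * (z * PN)) * b) := by rw [hzPN]
        _ = b * ((PM * (D * z)) * (PN * b)) := by simp only [mul_assoc]
        _ = b * ((PM * (z * D)) * (PN * b)) := by rw [hzD]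
        _ = b * ((PM * z) * (D * (PN * b))) := by simp only [mul_assoc]
        _ = b * ((z * PM) * (D * (PN * b))) := by rw [hzPM]
        _ = (b * z) * ((PM * D * PN) * b) := by simp only [mul_assoc]
        _ = (b * z) * PM := by rw [hb2]
        _ = b * (z * PM) := by rw [mul_assoc]
        _ = b * (PM * z) := by rw [hzPM]
        _ = (b * PM) * z := by rw [mul_assoc]
        _ = b * z := by rw [hbPM]
    exact ⟨b, hbA, hb1, hb2, hb3⟩
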